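/- A Poisson random variable Q with mean γC, for a single slot, satisfies the lower bound on outage of a proactive network with window T: limsup as C→∞ of -(1/C)·log P(Q > C(T+1)) is at most (T+1)(γ/(T+1) - 1 + log((T+1)/γ)). -/

import Mathlib

open Filter Real Topology

noncomputable def poisP (l : ℝ) (k : ℕ) : ℝ := Real.exp (-l) * l ^ k / (Nat.factorial k)

noncomputable def poissonTail (l : ℝ) (a : ℝ) : ℝ :=
  ∑' k : ℕ, if a < (k : ℝ) then poisP l k else 0

lemma poisP_nonneg {l : ℝ} (hl : 0 ≤ l) (k : ℕ) : 0 ≤ poisP l k := by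
  unfold poisP; positivity

lemma poisP_pos {l : ℝ} (hl : 0 < l) (k : ℕ) : 0 < poisP l k := by
  unfold poisP
  have : (0:ℝ) < (Nat.factorial k : ℝ) := by exact_mod_cast Nat.factorial_pos k
  positivity

lemma summable_poisP (l : ℝ) : Summable (poisP l) := by
  have := (Real.summable_pow_div_factorial l).mul_left (Real.exp (-l))
  unfold poisP
  simp_rw [mul_div_assoc]
  exact this

lemma tsum_poisP (l : ℝ) : ∑' k, poisP l k = 1 := by
  have h : ∑' k : ℕ, l ^ k / (Nat.factorial k : ℝ) = Real.exp l := by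
    rw [Real.exp_eq_exp_ℝ, NormedSpace.exp_eq_tsum_div]
  calc ∑' k, poisP l k = Real.exp (-l) * ∑' k : ℕ, l ^ k / (Nat.factorial k : ℝ) := by
        rw [← tsum_mul_left]; unfold poisP; simp [mul_div_assoc]
    _ = Real.exp (-l) * Real.exp l := by rw [h]
    _ = 1 := by rw [← Real.exp_add]; simp

lemma summable_tail (l : ℝ) (hl : 0 ≤ l) (a : ℝ) :
    Summable (fun k : ℕ => if a < (k : ℝ) then poisP l k else 0) := by
  apply Summable.of_nonneg_of_le (fun k => ?_) (fun k => ?_) (summable_poisP l)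
  · split
    · exact poisP_nonneg hl k
    · exact le_rfl
  · split
    · exact le_rfl
    · exact poisP_nonneg hl k

lemma tail_nonneg {l : ℝ} (hl : 0 ≤ l) (a : ℝ) : 0 ≤ poissonTail l a := by
  apply tsum_nonneg; intro k; split
  · exact poisP_nonneg hl k
  · exact le_rfl

lemma tail_le_one {l : ℝ} (hl : 0 ≤ l) (a : ℝ) : poissonTail l a ≤ 1 := by
  rw [← tsum_poisP l]
  apply Summable.tsum_le_tsum _ (summable_tail l hl a) (summable_poisP l)
  intro k; split
  · exact le_rfl
  · exact poisP_nonneg hl k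

lemma log_factorial_le : ∀ n : ℕ, 1 ≤ n →
    Real.log (Nat.factorial n) ≤ n * Real.log n - n + 1 + Real.log n := by
  intro n
  induction n with
  | zero => omega
  | succ m ih =>
    intro _
    rcases Nat.eq_zero_or_pos m with hm | hm
    · subst hm; simp
    have hm1 : (1:ℝ) ≤ (m:ℝ) := by exact_mod_cast hm
    have hm0 : (0:ℝ) < (m:ℝ) := by linarith
    have hm10 : (0:ℝ) < (m:ℝ) + 1 := by linarith
    have ihm := ih hm
    have hfac : Real.log (Nat.factorial (m+1)) =
        Real.log ((m:ℝ)+1) + Real.log (Nat.factorial m) := by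
      have : ((Nat.factorial (m+1) : ℕ) : ℝ) = ((m:ℝ)+1) * (Nat.factorial m : ℝ) := by
        rw [Nat.factorial_succ]; push_cast; ring
      rw [this, Real.log_mul (by positivity)
        (by exact_mod_cast (Nat.factorial_pos m).ne')]
    have key : (1:ℝ) ≤ ((m:ℝ)+1) * (Real.log ((m:ℝ)+1) - Real.log m) := by
      have h := Real.log_le_sub_one_of_pos (show (0:ℝ) < (m:ℝ)/((m:ℝ)+1) by positivity)
      rw [Real.log_div (by positivity) (by positivity)] at h
      have h2 : (m:ℝ)/((m:ℝ)+1) - 1 = -(1/((m:ℝ)+1)) := by field_simp; ring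
      rw [h2] at h
      have h3 : (1:ℝ)/((m:ℝ)+1) ≤ Real.log ((m:ℝ)+1) - Real.log m := by linarith
      calc (1:ℝ) = ((m:ℝ)+1) * (1/((m:ℝ)+1)) := by field_simp
        _ ≤ ((m:ℝ)+1) * (Real.log ((m:ℝ)+1) - Real.log m) :=
            mul_le_mul_of_nonneg_left h3 (by positivity)
    have hcast : ((m+1 : ℕ) : ℝ) = (m:ℝ) + 1 := by push_cast; ring
    rw [hfac, hcast]
    nlinarith [key, ihm]

/-- For `Q` Poisson with mean `γC`, the limsup as `C → ∞` of
`-(1/C)·log P(Q > C(T+1))` is at most `(T+1)(γ/(T+1) - 1 + log((T+1)/γ))`. -/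
theorem poisson_linear_prediction_diversity_upper (γ : ℝ) (hγ0 : 0 < γ) (hγ1 : γ < 1) (T : ℕ) :
    Filter.limsup (fun C : ℕ =>
        -(1 / (C : ℝ)) * Real.log (poissonTail (γ * C) ((C : ℝ) * ((T : ℝ) + 1)))) atTop ≤
      ((T : ℝ) + 1) * (γ / ((T : ℝ) + 1) - 1 + Real.log (((T : ℝ) + 1) / γ)) := by
  set f : ℕ → ℝ := fun C : ℕ =>
      -(1 / (C : ℝ)) * Real.log (poissonTail (γ * C) ((C : ℝ) * ((T : ℝ) + 1))) with hf
  set a : ℕ → ℝ := fun C => (T:ℝ) + 1 + 1/(C:ℝ) with ha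
  set u : ℕ → ℝ := fun C => γ + a C * (Real.log (a C) - Real.log γ) - a C
      + (1 + Real.log (a C)) * (1/(C:ℝ)) + Real.log C / (C:ℝ) with hu
  set L : ℝ := ((T : ℝ) + 1) * (γ / ((T : ℝ) + 1) - 1 + Real.log (((T : ℝ) + 1) / γ)) with hL
  -- nonnegativity of f
  have hf0 : ∀ C, 0 ≤ f C := by
    intro C
    have hl : (0:ℝ) ≤ γ * C := by positivity
    have h1 := tail_nonneg hl ((C : ℝ) * ((T : ℝ) + 1))
    have h2 := tail_le_one hl ((C : ℝ) * ((T : ℝ) + 1))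
    have h3 : Real.log (poissonTail (γ * C) ((C : ℝ) * ((T : ℝ) + 1))) ≤ 0 :=
      Real.log_nonpos h1 h2
    have h4 : (0:ℝ) ≤ 1/(C:ℝ) := by positivity
    simp only [hf]
    nlinarith
  -- f ≤ u eventually
  have hle : ∀ᶠ C in atTop, f C ≤ u C := by
    filter_upwards [eventually_ge_atTop 1] with C hC1
    have hC : (1:ℝ) ≤ (C:ℝ) := by exact_mod_cast hC1
    have hC0 : (0:ℝ) < (C:ℝ) := by linarith
    set l : ℝ := γ * C with hl
    have hl0 : 0 < l := by positivity
    set k : ℕ := (T+1)*C + 1 with hk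
    have hkR : (k:ℝ) = ((T:ℝ)+1)*(C:ℝ) + 1 := by rw [hk]; push_cast; ring
    have hkgt : (C:ℝ) * ((T:ℝ)+1) < (k:ℝ) := by rw [hkR]; nlinarith
    have hk1 : 1 ≤ k := by omega
    have hkpos : (0:ℝ) < (k:ℝ) := by rw [hkR]; positivity
    have hp : 0 < poisP l k := poisP_pos hl0 k
    -- single term ≤ tail
    have hterm : poisP l k ≤ poissonTail l ((C:ℝ) * ((T:ℝ)+1)) := by
      have hnn : ∀ j : ℕ, j ≠ k →
          0 ≤ (if (C:ℝ)*((T:ℝ)+1) < (j:ℝ) then poisP l j else 0) := by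
        intro j _
        split
        · exact poisP_nonneg hl0.le j
        · exact le_rfl
      have h := Summable.le_tsum (summable_tail l hl0.le ((C:ℝ) * ((T:ℝ)+1))) k hnn
      rw [if_pos hkgt] at h
      exact h
    have htail0 : 0 < poissonTail l ((C:ℝ) * ((T:ℝ)+1)) := lt_of_lt_of_le hp hterm
    have hlog1 : Real.log (poisP l k) ≤ Real.log (poissonTail l ((C:ℝ) * ((T:ℝ)+1))) :=
      (Real.log_le_log_iff hp htail0).mpr hterm
    have step1 : f C ≤ -(1/(C:ℝ)) * Real.log (poisP l k) := by
      have h4 : (0:ℝ) ≤ 1/(C:ℝ) := by positivity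
      have := mul_le_mul_of_nonneg_left hlog1 h4
      simp only [hf]
      nlinarith
    -- compute log of the term
    have hp_eq : Real.log (poisP l k) =
        -l + (k:ℝ) * Real.log l - Real.log (Nat.factorial k) := by
      unfold poisP
      have hfk : (0:ℝ) < (Nat.factorial k : ℝ) := by exact_mod_cast Nat.factorial_pos k
      rw [Real.log_div (by positivity) (by positivity),
        Real.log_mul (Real.exp_ne_zero _) (by positivity), Real.log_exp, Real.log_pow]
    have hfact := log_factorial_le k hk1
    have step2 : -(1/(C:ℝ)) * Real.log (poisP l k) ≤
        (1/(C:ℝ)) * (l - (k:ℝ) * Real.log l + ((k:ℝ) * Real.log k - (k:ℝ) + 1 + Real.log k)) := by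
      rw [hp_eq]
      have h4 : (0:ℝ) ≤ 1/(C:ℝ) := by positivity
      nlinarith
    -- rewrite in terms of a C
    have haC : 0 < a C := by simp only [ha]; positivity
    have hka : (k:ℝ) = a C * (C:ℝ) := by
      simp only [ha]; rw [hkR]; field_simp
    have hlogk : Real.log (k:ℝ) = Real.log (a C) + Real.log (C:ℝ) := by
      rw [hka, Real.log_mul haC.ne' hC0.ne']
    have hlogl : Real.log l = Real.log γ + Real.log (C:ℝ) := by
      rw [hl, Real.log_mul hγ0.ne' hC0.ne']
    have step3 : (1/(C:ℝ)) * (l - (k:ℝ) * Real.log l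
        + ((k:ℝ) * Real.log k - (k:ℝ) + 1 + Real.log k)) = u C := by
      simp only [hu]
      rw [hka, Real.log_mul haC.ne' hC0.ne', hlogl, hl]
      field_simp
      ring
    calc f C ≤ -(1/(C:ℝ)) * Real.log (poisP l k) := step1
      _ ≤ _ := step2
      _ = u C := step3
  -- u tends to L
  have h1 : Tendsto (fun C : ℕ => 1/(C:ℝ)) atTop (𝓝 0) := tendsto_one_div_atTop_nhds_zero_nat
  have haT : Tendsto a atTop (𝓝 ((T:ℝ)+1)) := by
    have h : Tendsto (fun C : ℕ => ((T:ℝ)+1) + 1/(C:ℝ)) atTop (𝓝 (((T:ℝ)+1) + 0)) :=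
      tendsto_const_nhds.add h1
    simpa [ha] using h
  have hT1 : (0:ℝ) < (T:ℝ) + 1 := by positivity
  have hloga : Tendsto (fun C => Real.log (a C)) atTop (𝓝 (Real.log ((T:ℝ)+1))) :=
    ((Real.continuousAt_log hT1.ne').tendsto.comp haT)
  have hlogC : Tendsto (fun C : ℕ => Real.log C / (C:ℝ)) atTop (𝓝 0) := by
    have h := Real.isLittleO_log_id_atTop.tendsto_div_nhds_zero
    exact h.comp tendsto_natCast_atTop_atTop
  have hlim : Tendsto u atTop (𝓝 (γ + ((T:ℝ)+1) * (Real.log ((T:ℝ)+1) - Real.log γ)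
      - ((T:ℝ)+1) + (1 + Real.log ((T:ℝ)+1)) * 0 + 0)) := by
    exact (((tendsto_const_nhds.add (haT.mul (hloga.sub tendsto_const_nhds))).sub haT).add
      ((tendsto_const_nhds.add hloga).mul h1)).add hlogC
  have hLeq : γ + ((T:ℝ)+1) * (Real.log ((T:ℝ)+1) - Real.log γ)
      - ((T:ℝ)+1) + (1 + Real.log ((T:ℝ)+1)) * 0 + 0 = L := by
    rw [hL, Real.log_div hT1.ne' hγ0.ne']
    field_simp
    ring
  rw [hLeq] at hlim
  have h2 : Filter.limsup f atTop ≤ Filter.limsup u atTop :=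
    limsup_le_limsup hle (isCoboundedUnder_le_of_le atTop hf0) hlim.isBoundedUnder_le
  calc Filter.limsup f atTop ≤ Filter.limsup u atTop := h2
    _ = L := hlim.limsup_eq
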